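/- arXiv:2311.05738 — 2 statements merged into one kernel-verified Lean document; each statement's English description precedes it below -/
import Mathlib

section
/- (Derivative formula for the optimal control) Let 0 ≤ τ < T and suppose u is differentiable on [τ,T], S(t) > 0, I(t) > 0 for t ∈ [τ,T], and the stationarity condition λ·c'(u(t)) + β·S(t)·I(t)·(p₁(t) − p₂(t)) = 0 holds for all t ∈ [τ,T]. Then for every t ∈ [τ,T], u'(t) = β·γ·S(t)·I(t)·p₁(t) / (λ·c''(u(t))); in particular, if p₁(t) < 0 for all t ∈ [τ,T], then u'(t) < 0 for all t ∈ [τ,T]. -/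
/-- (Derivative formula for the optimal control) Under the stationarity condition
`λ·c'(u(t)) + β·S(t)·I(t)·(p₁(t) − p₂(t)) = 0` on `[τ,T]`, one has
`u'(t) = β·γ·S(t)·I(t)·p₁(t) / (λ·c''(u(t)))`; in particular if `p₁ < 0` on `[τ,T]`
then `u' < 0` on `[τ,T]`. -/
theorem optimal_control_derivative_formula
    (T β γ lam : ℝ) (hT : 0 < T) (hβ : 0 < β) (hγ : 0 < γ) (hlam : 0 < lam)
    (c : ℝ → ℝ) (V : Set ℝ) (hV : IsOpen V) (hV01 : Set.Ico (0:ℝ) 1 ⊆ V)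
    (hc : ContDiffOn ℝ 2 c V)
    (hc'' : ∀ v ∈ V, 0 < deriv (deriv c) v)
    (u S I R : ℝ → ℝ)
    (hu_range : ∀ t ∈ Set.Icc 0 T, 0 ≤ u t ∧ u t < 1)
    (hS : ∀ t ∈ Set.Icc 0 T, HasDerivAt S (-(β * (1 - u t) * S t * I t)) t)
    (hI : ∀ t ∈ Set.Icc 0 T, HasDerivAt I (β * (1 - u t) * S t * I t - γ * I t) t)
    (hR : ∀ t ∈ Set.Icc 0 T, HasDerivAt R (γ * I t) t)
    (p₁ p₂ : ℝ → ℝ)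
    (hp₁ : ∀ t ∈ Set.Icc 0 T,
      HasDerivAt p₁ (-(β * (p₂ t - p₁ t) * (1 - u t) * I t)) t)
    (hp₂ : ∀ t ∈ Set.Icc 0 T,
      HasDerivAt p₂ (-(β * (p₂ t - p₁ t) * (1 - u t) * S t) + γ * p₂ t) t)
    (τ : ℝ) (hτ0 : 0 ≤ τ) (hτT : τ < T)
    (hu_diff : ∀ t ∈ Set.Icc τ T, DifferentiableAt ℝ u t)
    (hSpos : ∀ t ∈ Set.Icc τ T, 0 < S t)
    (hIpos : ∀ t ∈ Set.Icc τ T, 0 < I t)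
    (hstat : ∀ t ∈ Set.Icc τ T,
      lam * deriv c (u t) + β * S t * I t * (p₁ t - p₂ t) = 0) :
    (∀ t ∈ Set.Icc τ T,
        deriv u t = β * γ * S t * I t * p₁ t / (lam * deriv (deriv c) (u t))) ∧
      ((∀ t ∈ Set.Icc τ T, p₁ t < 0) → ∀ t ∈ Set.Icc τ T, deriv u t < 0) := by
  have hc' : ContDiffOn ℝ 1 (deriv c) V :=
    hc.deriv_of_isOpen (m := 1) hV (by norm_num)
  have key : ∀ t ∈ Set.Icc τ T,
      deriv u t = β * γ * S t * I t * p₁ t / (lam * deriv (deriv c) (u t)) := by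
    intro t ht
    have ht0T : t ∈ Set.Icc (0:ℝ) T := ⟨le_trans hτ0 ht.1, ht.2⟩
    have hut : u t ∈ V := hV01 ⟨(hu_range t ht0T).1, (hu_range t ht0T).2⟩
    have hc2 : HasDerivAt (deriv c) (deriv (deriv c) (u t)) (u t) :=
      ((hc'.differentiableOn one_ne_zero).differentiableAt (hV.mem_nhds hut)).hasDerivAt
    have hcu : HasDerivAt (fun s => deriv c (u s))
        (deriv (deriv c) (u t) * deriv u t) t :=
      hc2.comp t (hu_diff t ht).hasDerivAt
    set D : ℝ := lam * (deriv (deriv c) (u t) * deriv u t) +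
        β * (((-(β * (1 - u t) * S t * I t)) * I t +
            S t * (β * (1 - u t) * S t * I t - γ * I t)) * (p₁ t - p₂ t) +
          S t * I t * ((-(β * (p₂ t - p₁ t) * (1 - u t) * I t)) -
            ((-(β * (p₂ t - p₁ t) * (1 - u t) * S t)) + γ * p₂ t))) with hD
    have big : HasDerivAt
        (fun s => lam * deriv c (u s) + β * (S s * I s * (p₁ s - p₂ s))) D t := by
      exact (hcu.const_mul lam).add
        ((((hS t ht0T).mul (hI t ht0T)).mul ((hp₁ t ht0T).sub (hp₂ t ht0T))).const_mul β)
    have hud : UniqueDiffWithinAt ℝ (Set.Icc τ T) t :=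
      (uniqueDiffOn_Icc hτT) t ht
    have hzero : HasDerivWithinAt
        (fun s => lam * deriv c (u s) + β * (S s * I s * (p₁ s - p₂ s)))
        0 (Set.Icc τ T) t := by
      refine (hasDerivWithinAt_const t _ (0:ℝ)).congr (fun s hs => ?_) ?_
      · have := hstat s hs; linarith [this]
      · have := hstat t ht; linarith [this]
    have hDeq : D = 0 := by
      rw [← big.hasDerivWithinAt.derivWithin hud, hzero.derivWithin hud]
    have hAne : lam * deriv (deriv c) (u t) ≠ 0 :=
      ne_of_gt (mul_pos hlam (hc'' _ hut))
    rw [hD] at hDeq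
    rw [eq_div_iff hAne]
    nlinarith [hDeq]
  refine ⟨key, fun hp t ht => ?_⟩
  rw [key t ht]
  have ht0T : t ∈ Set.Icc (0:ℝ) T := ⟨le_trans hτ0 ht.1, ht.2⟩
  have hut : u t ∈ V := hV01 ⟨(hu_range t ht0T).1, (hu_range t ht0T).2⟩
  exact div_neg_of_neg_of_pos
    (mul_neg_of_pos_of_neg
      (mul_pos (mul_pos (mul_pos hβ hγ) (hSpos t ht)) (hIpos t ht)) (hp t ht))
    (mul_pos hlam (hc'' _ hut))
end

section
/- (Theorem 3.1) There exists τ ∈ [0,T) such that u is strictly decreasing on [τ,T]: for all τ ≤ t₁ < t₂ ≤ T one has u(t₂) < u(t₁). Consequently u'(t) ≤ 0 wherever u is differentiable on [τ,T]. -/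
open Set Filter

lemma pos_of_linear_ode (T : ℝ) (f x : ℝ → ℝ) (hf : Continuous f)
    (hx : ∀ t ∈ Set.Icc 0 T, HasDerivAt x (f t * x t) t) (hx0 : 0 < x 0) :
    ∀ t ∈ Set.Icc 0 T, 0 < x t := by
  set F : ℝ → ℝ := fun t => ∫ s in (0:ℝ)..t, f s with hFdef
  have hF : ∀ t, HasDerivAt F (f t) t := fun t =>
    (hf.integral_hasStrictDerivAt 0 t).hasDerivAt
  set h : ℝ → ℝ := fun t => x t * Real.exp (-F t) with hhdef
  have hh : ∀ t ∈ Set.Icc 0 T, HasDerivAt h 0 t := by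
    intro t ht
    have hd := (hx t ht).mul ((hF t).neg.exp)
    exact hd.congr_deriv (by ring)
  have hconst : ∀ t ∈ Set.Icc 0 T, h t = h 0 := by
    apply constant_of_has_deriv_right_zero
    · intro t ht
      exact ((hh t ht).differentiableAt.continuousAt).continuousWithinAt
    · intro y hy
      exact (hh y (Ico_subset_Icc_self hy)).hasDerivWithinAt
  intro t ht
  have h0 : h 0 = x 0 := by
    simp [hhdef, hFdef, intervalIntegral.integral_same]
  have := hconst t ht
  rw [h0] at this
  simp only [hhdef] at this
  have hexp := Real.exp_pos (-F t)
  nlinarith [this, hx0]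

/-- (Theorem 3.1) Under the KKT conditions for the optimal control problem of the
controlled SIR model, there exists `τ ∈ [0,T)` such that the optimal control `u`
is strictly decreasing on `[τ,T]`; consequently `u' ≤ 0` wherever `u` is
differentiable on `[τ,T]`. -/
theorem optimal_control_eventually_decreasing
    (T β γ lam : ℝ) (hT : 0 < T) (hβ : 0 < β) (hγ : 0 < γ) (hlam : 0 < lam)
    (c : ℝ → ℝ) (V : Set ℝ) (hV : IsOpen V) (hV01 : Set.Ico (0:ℝ) 1 ⊆ V)
    (hc : ContDiffOn ℝ 2 c V)
    (hc'' : ∀ v ∈ V, 0 < deriv (deriv c) v)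
    (hc0 : c 0 = 0) (hc'0 : deriv c 0 = 0)
    (hc'pos : ∀ v ∈ V, 0 < v → 0 < deriv c v)
    (hc'neg : ∀ v ∈ V, v < 0 → deriv c v < 0)
    (hc_blowup : Filter.Tendsto c (nhdsWithin 1 (Set.Iio 1)) Filter.atTop)
    (u S I R : ℝ → ℝ)
    (hu_cont : Continuous u)
    (hu_range : ∀ t ∈ Set.Icc 0 T, 0 ≤ u t ∧ u t < 1)
    (hS0 : 0 < S 0) (hI0 : 0 < I 0)
    (hS : ∀ t ∈ Set.Icc 0 T, HasDerivAt S (-(β * (1 - u t) * S t * I t)) t)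
    (hI : ∀ t ∈ Set.Icc 0 T, HasDerivAt I (β * (1 - u t) * S t * I t - γ * I t) t)
    (hR : ∀ t ∈ Set.Icc 0 T, HasDerivAt R (γ * I t) t)
    (p₁ p₂ : ℝ → ℝ)
    (hp₁ : ∀ t ∈ Set.Icc 0 T,
      HasDerivAt p₁ (-(β * (p₂ t - p₁ t) * (1 - u t) * I t)) t)
    (hp₂ : ∀ t ∈ Set.Icc 0 T,
      HasDerivAt p₂ (-(β * (p₂ t - p₁ t) * (1 - u t) * S t) + γ * p₂ t) t)
    (hp₁T : p₁ T = -1) (hp₂T : p₂ T = 0)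
    (q : ℝ → ℝ)
    (hkkt_stat : ∀ t ∈ Set.Icc 0 T,
      lam * deriv c (u t) + β * S t * I t * (p₁ t - p₂ t) - q t = 0)
    (hq_nonneg : ∀ t ∈ Set.Icc 0 T, 0 ≤ q t)
    (hu_nonneg : ∀ t ∈ Set.Icc 0 T, 0 ≤ u t)
    (hcs : ∀ t ∈ Set.Icc 0 T, q t * u t = 0) :
    ∃ τ, 0 ≤ τ ∧ τ < T ∧
      (∀ t₁ ∈ Set.Icc τ T, ∀ t₂ ∈ Set.Icc τ T, t₁ < t₂ → u t₂ < u t₁) ∧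
      (∀ t ∈ Set.Icc τ T, DifferentiableAt ℝ u t → deriv u t ≤ 0) := by
  have hTmem : T ∈ Set.Icc (0:ℝ) T := ⟨le_of_lt hT, le_refl T⟩
  -- continuity facts
  have contS : ∀ t ∈ Set.Icc 0 T, ContinuousAt S t := fun t ht =>
    (hS t ht).differentiableAt.continuousAt
  have contI : ∀ t ∈ Set.Icc 0 T, ContinuousAt I t := fun t ht =>
    (hI t ht).differentiableAt.continuousAt
  have contp₁ : ∀ t ∈ Set.Icc 0 T, ContinuousAt p₁ t := fun t ht =>
    (hp₁ t ht).differentiableAt.continuousAt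
  -- projection onto [0,T]
  set proj : ℝ → ℝ := fun t => max 0 (min t T) with hprojdef
  have contproj : Continuous proj := continuous_const.max (continuous_id.min continuous_const)
  have proj_mem : ∀ t, proj t ∈ Set.Icc (0:ℝ) T := by
    intro t
    refine ⟨le_max_left _ _, max_le (le_of_lt hT) (min_le_right _ _)⟩
  have proj_eq : ∀ t ∈ Set.Icc (0:ℝ) T, proj t = t := by
    intro t ht
    simp only [hprojdef]
    rw [min_eq_left ht.2, max_eq_right ht.1]
  have contSproj : Continuous (fun t => S (proj t)) := by
    rw [continuous_iff_continuousAt]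
    exact fun t => (contS _ (proj_mem t)).comp contproj.continuousAt
  have contIproj : Continuous (fun t => I (proj t)) := by
    rw [continuous_iff_continuousAt]
    exact fun t => (contI _ (proj_mem t)).comp contproj.continuousAt
  -- positivity of S and I
  have hSpos : ∀ t ∈ Set.Icc 0 T, 0 < S t := by
    apply pos_of_linear_ode T (fun t => -(β * (1 - u t) * I (proj t))) S
    · exact ((continuous_const.mul (continuous_const.sub hu_cont)).mul contIproj).neg
    · intro t ht
      have := hS t ht
      rw [proj_eq t ht]
      convert this using 1
      ring
    · exact hS0
  have hIpos : ∀ t ∈ Set.Icc 0 T, 0 < I t := by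
    apply pos_of_linear_ode T (fun t => β * (1 - u t) * S (proj t) - γ) I
    · exact ((continuous_const.mul (continuous_const.sub hu_cont)).mul contSproj).sub
        continuous_const
    · intro t ht
      have := hI t ht
      rw [proj_eq t ht]
      convert this using 1
      ring
    · exact hI0
  -- u T > 0
  have huT : 0 < u T := by
    by_contra hle
    push_neg at hle
    have huT0 : u T = 0 := le_antisymm hle (hu_nonneg T hTmem)
    have hstat := hkkt_stat T hTmem
    rw [huT0, hc'0, hp₁T, hp₂T] at hstat
    have hq := hq_nonneg T hTmem
    have hSI := mul_pos (hSpos T hTmem) (hIpos T hTmem)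
    nlinarith
  -- choose τ near T with p₁ < 0 and u > 0 on [τ, T]
  have hEv : ∀ᶠ t in nhds T, p₁ t < 0 ∧ 0 < u t := by
    have h1 : ∀ᶠ t in nhds T, p₁ t < 0 := by
      have : Set.Iio (0:ℝ) ∈ nhds (p₁ T) := isOpen_Iio.mem_nhds (by rw [hp₁T]; norm_num)
      exact (contp₁ T hTmem) this
    have h2 : ∀ᶠ t in nhds T, 0 < u t := by
      have : Set.Ioi (0:ℝ) ∈ nhds (u T) := isOpen_Ioi.mem_nhds huT
      exact hu_cont.continuousAt this
    exact h1.and h2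
  obtain ⟨ε, hε, hball⟩ := Metric.eventually_nhds_iff.mp hEv
  set τ : ℝ := max 0 (T - ε / 2) with hτdef
  have hτ0 : 0 ≤ τ := le_max_left _ _
  have hτT : τ < T := max_lt hT (by linarith)
  have hsub : Set.Icc τ T ⊆ Set.Icc 0 T := Set.Icc_subset_Icc hτ0 le_rfl
  have hgood : ∀ t ∈ Set.Icc τ T, p₁ t < 0 ∧ 0 < u t := by
    intro t ht
    apply hball
    rw [Real.dist_eq, abs_lt]
    have h1 : T - ε / 2 ≤ τ := le_max_right _ _
    constructor <;> [linarith [ht.1]; linarith [ht.2]]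
  -- ψ and its derivative
  set ψ : ℝ → ℝ := fun t => β * S t * I t * (p₂ t - p₁ t) with hψdef
  have hψderiv : ∀ t ∈ Set.Icc 0 T, HasDerivAt ψ (β * γ * S t * I t * p₁ t) t := by
    intro t ht
    have hd := (((hS t ht).const_mul β).mul (hI t ht)).mul ((hp₂ t ht).sub (hp₁ t ht))
    exact hd.congr_deriv (by simp only [Pi.sub_apply, Pi.mul_apply]; ring)
  have hψanti : StrictAntiOn ψ (Set.Icc τ T) := by
    apply strictAntiOn_of_deriv_neg (convex_Icc τ T)
    · intro t ht
      exact ((hψderiv t (hsub ht)).differentiableAt.continuousAt).continuousWithinAt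
    · intro x hx
      rw [interior_Icc] at hx
      have hxm : x ∈ Set.Icc τ T := Set.Ioo_subset_Icc_self hx
      rw [(hψderiv x (hsub hxm)).deriv]
      have hp₁x := (hgood x hxm).1
      have hSx := hSpos x (hsub hxm)
      have hIx := hIpos x (hsub hxm)
      have hpos : 0 < β * γ * S x * I x := by positivity
      exact mul_neg_of_pos_of_neg hpos hp₁x
  -- on [τ,T], lam * c'(u t) = ψ t
  have hlc : ∀ t ∈ Set.Icc τ T, lam * deriv c (u t) = ψ t := by
    intro t ht
    have hq0 : q t = 0 := by
      have := hcs t (hsub ht)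
      rcases mul_eq_zero.mp this with h | h
      · exact h
      · exact absurd h (ne_of_gt (hgood t ht).2)
    have hstat := hkkt_stat t (hsub ht)
    rw [hq0] at hstat
    simp only [hψdef]
    linarith [hstat]
  -- c' strictly monotone on [0,1)
  have hmono : StrictMonoOn (deriv c) (Set.Ico (0:ℝ) 1) := by
    apply strictMonoOn_of_deriv_pos (convex_Ico 0 1)
    · exact (hc.continuousOn_deriv_of_isOpen hV (by norm_num)).mono hV01
    · intro x hx
      rw [interior_Ico] at hx
      exact hc'' x (hV01 (Set.Ioo_subset_Ico_self hx))
  have humem : ∀ t ∈ Set.Icc τ T, u t ∈ Set.Ico (0:ℝ) 1 := fun t ht =>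
    ⟨(hu_range t (hsub ht)).1, (hu_range t (hsub ht)).2⟩
  -- strict decrease
  have hdec : ∀ t₁ ∈ Set.Icc τ T, ∀ t₂ ∈ Set.Icc τ T, t₁ < t₂ → u t₂ < u t₁ := by
    intro t₁ ht₁ t₂ ht₂ hlt
    have hψlt : ψ t₂ < ψ t₁ := hψanti ht₁ ht₂ hlt
    have h1 := hlc t₁ ht₁
    have h2 := hlc t₂ ht₂
    have hclt : deriv c (u t₂) < deriv c (u t₁) := by
      have : lam * deriv c (u t₂) < lam * deriv c (u t₁) := by linarith
      exact (mul_lt_mul_iff_right₀ hlam).mp this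
    exact (hmono.lt_iff_lt (humem t₂ ht₂) (humem t₁ ht₁)).mp hclt
  refine ⟨τ, hτ0, hτT, hdec, ?_⟩
  -- derivative nonpositive
  intro t ht hdiff
  have hslope := hasDerivAt_iff_tendsto_slope.mp hdiff.hasDerivAt
  rcases lt_or_eq_of_le ht.2 with htT | htT
  · -- t < T : use slopes from the right
    have hle : nhdsWithin t (Set.Ioi t) ≤ nhdsWithin t {t}ᶜ :=
      nhdsWithin_mono t (fun y hy => ne_of_gt hy)
    have htend := hslope.mono_left hle
    have hmem : Set.Ioo t T ∈ nhdsWithin t (Set.Ioi t) :=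
      Ioo_mem_nhdsGT_of_mem ⟨le_refl t, htT⟩
    refine le_of_tendsto htend (eventually_of_mem hmem ?_)
    intro y hy
    have hym : y ∈ Set.Icc τ T := ⟨le_trans ht.1 (le_of_lt hy.1), le_of_lt hy.2⟩
    have hu : u y < u t := hdec t ht y hym hy.1
    rw [slope_def_field]
    apply div_nonpos_of_nonpos_of_nonneg <;> linarith [hy.1]
  · -- t = T : use slopes from the left
    subst htT
    have hle : nhdsWithin t (Set.Iio t) ≤ nhdsWithin t {t}ᶜ :=
      nhdsWithin_mono t (fun y hy => ne_of_lt hy)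
    have htend := hslope.mono_left hle
    have hmem : Set.Ioo τ t ∈ nhdsWithin t (Set.Iio t) :=
      Ioo_mem_nhdsLT_of_mem ⟨hτT, le_refl t⟩
    refine le_of_tendsto htend (eventually_of_mem hmem ?_)
    intro y hy
    have hym : y ∈ Set.Icc τ t := ⟨le_of_lt hy.1, le_of_lt hy.2⟩
    have hu : u t < u y := hdec y hym t ht hy.2
    rw [slope_def_field]
    apply div_nonpos_of_nonneg_of_nonpos <;> linarith [hy.2]
end
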